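/- Let L be a meet continuous sup-semilattice (every nonempty finite subset has a supremum). Then D' is a lower set for every directed subset D of L. -/

import Mathlib

open Set

section OrderDefs

variable {L : Type*} [Preorder L]

/-- Downward closure `↓A`. -/
def dw (A : Set L) : Set L := {x | ∃ a ∈ A, x ≤ a}

/-- Upward closure `↑A`. -/
def up (A : Set L) : Set L := {x | ∃ a ∈ A, a ≤ x}

/-- Scott closure of a set. -/
def scottCl (A : Set L) : Set L := @closure L (Topology.scott L Set.univ) A

/-- `A' = {x : ∃ directed D ⊆ ↓A with x = sup D}`. -/
def oneStep (A : Set L) : Set L :=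
  {x | ∃ D : Set L, D ⊆ dw A ∧ D.Nonempty ∧ DirectedOn (· ≤ ·) D ∧ IsLUB D x}

/-- `A'' = {x : ∃ directed D ⊆ ↓A with x ≤ sup D}`. -/
def weakOneStep (A : Set L) : Set L :=
  {x | ∃ D : Set L, D ⊆ dw A ∧ D.Nonempty ∧ DirectedOn (· ≤ ·) D ∧ ∃ y, IsLUB D y ∧ x ≤ y}

/-- A poset has one-step closure if `cl(A) = A'` for all `A`. -/
def HasOneStepClosure (L : Type*) [Preorder L] : Prop :=
  ∀ A : Set L, scottCl A = oneStep A

/-- A poset has weak one-step closure if `cl(A) = A''` for all `A`. -/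
def HasWeakOneStepClosure (L : Type*) [Preorder L] : Prop :=
  ∀ A : Set L, scottCl A = weakOneStep A

/-- Meet continuity: `x ≤ sup D` implies `x ∈ cl(↓D ∩ ↓x)`. -/
def MeetContinuous (L : Type*) [Preorder L] : Prop :=
  ∀ x : L, ∀ D : Set L, D.Nonempty → DirectedOn (· ≤ ·) D → ∀ s, IsLUB D s → x ≤ s →
    x ∈ scottCl (dw D ∩ dw ({x} : Set L))

/-- The way-below relation `x ≪ y`. -/
def wayBelow (x y : L) : Prop :=
  ∀ D : Set L, D.Nonempty → DirectedOn (· ≤ ·) D → ∀ s, IsLUB D s → y ≤ s →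
    (D ∩ up ({x} : Set L)).Nonempty

/-- The weakly way-below relation `x ≪_w y`. -/
def weaklyWayBelow (x y : L) : Prop :=
  ∀ D : Set L, D.Nonempty → DirectedOn (· ≤ ·) D → IsLUB D y →
    (D ∩ up ({x} : Set L)).Nonempty

/-- A continuous poset: each `⇓x` is directed with supremum `x`. -/
def ContinuousPoset (L : Type*) [Preorder L] : Prop :=
  ∀ x : L, {y | wayBelow y x}.Nonempty ∧ DirectedOn (· ≤ ·) {y | wayBelow y x} ∧
    IsLUB {y | wayBelow y x} x

/-- An exact poset: each `⇓_w x` is directed with supremum `x`. -/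
def ExactPoset (L : Type*) [Preorder L] : Prop :=
  ∀ x : L, {y | weaklyWayBelow y x}.Nonempty ∧ DirectedOn (· ≤ ·) {y | weaklyWayBelow y x} ∧
    IsLUB {y | weaklyWayBelow y x} x

/-- `F ≪ x` for a set `F`: every directed `D` with `sup D ≥ x` meets `↑F`. -/
def finWayBelow (F : Set L) (x : L) : Prop :=
  ∀ D : Set L, D.Nonempty → DirectedOn (· ≤ ·) D → ∀ s, IsLUB D s → x ≤ s →
    (D ∩ up F).Nonempty

/-- A quasicontinuous poset: each `fin(x)` is a directed family (Smyth preorder)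
with `↑x = ⋂_{F ∈ fin(x)} ↑F`. -/
def QuasicontinuousPoset (L : Type*) [Preorder L] : Prop :=
  ∀ x : L, {F : Set L | F.Finite ∧ finWayBelow F x}.Nonempty ∧
    DirectedOn (fun F G => up G ⊆ up F) {F : Set L | F.Finite ∧ finWayBelow F x} ∧
    up ({x} : Set L) = ⋂ F ∈ {F : Set L | F.Finite ∧ finWayBelow F x}, up F

/-- A dcpo: every (nonempty) directed subset has a least upper bound. -/
def IsDcpo (L : Type*) [Preorder L] : Prop :=
  ∀ D : Set L, D.Nonempty → DirectedOn (· ≤ ·) D → ∃ x, IsLUB D x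

end OrderDefs

/-- In a meet continuous sup-semilattice, `D'` is a lower set for every directed `D`. -/
theorem lowerSet_oneStep_of_meetContinuous_supSemilattice {L : Type*} [SemilatticeSup L]
    (hmc : MeetContinuous L) :
    ∀ D : Set L, D.Nonempty → DirectedOn (· ≤ ·) D → IsLowerSet (oneStep D) := by
  intro D _ hDdir x y hyx hx
  obtain ⟨E, hED, hEne, hEdir, hElub⟩ := hx
  have hmem := hmc y E hEne hEdir x hElub hyx
  -- The candidate set
  set G : Set L := dw D ∩ dw ({y} : Set L) with hG
  have hsub : dw E ∩ dw ({y} : Set L) ⊆ G := by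
    rintro z ⟨⟨e, heE, hze⟩, hzy⟩
    obtain ⟨d, hdD, hed⟩ := hED heE
    exact ⟨⟨d, hdD, hze.trans hed⟩, hzy⟩
  -- nonemptiness from the closure
  have hne : (dw E ∩ dw ({y} : Set L)).Nonempty := by
    by_contra h
    rw [Set.not_nonempty_iff_eq_empty] at h
    letI := Topology.scott L Set.univ
    rw [scottCl, h, closure_empty] at hmem
    exact hmem
  refine ⟨G, Set.inter_subset_left, hne.mono hsub, ?_, ?_, ?_⟩
  · -- directed
    rintro z1 ⟨⟨d1, hd1, hz1⟩, y1, hy1, hzy1⟩ z2 ⟨⟨d2, hd2, hz2⟩, y2, hy2, hzy2⟩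
    obtain ⟨d, hd, h1, h2⟩ := hDdir d1 hd1 d2 hd2
    refine ⟨z1 ⊔ z2, ⟨⟨d, hd, sup_le (hz1.trans h1) (hz2.trans h2)⟩,
      y, rfl, sup_le (hzy1.trans (le_of_eq hy1)) (hzy2.trans (le_of_eq hy2))⟩, le_sup_left, le_sup_right⟩
  · -- upper bound
    rintro z ⟨-, w, hw, hzw⟩
    exact hzw.trans (le_of_eq hw)
  · -- least
    intro u hu
    have hGu : G ⊆ Set.Iic u := fun z hz => hu hz
    have hclosed : @IsClosed L (Topology.scott L Set.univ) (Set.Iic u) := by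
      letI := Topology.scott L Set.univ
      haveI : Topology.IsScott L Set.univ := ⟨rfl⟩
      exact isClosed_Iic
    have : scottCl (dw E ∩ dw ({y} : Set L)) ⊆ Set.Iic u := by
      letI := Topology.scott L Set.univ
      exact closure_minimal (hsub.trans hGu) hclosed
    exact this hmem
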